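/- Let I and R be nonempty finite types, B ≥ 1, and β : I → Fin B a surjective block labeling with block sizes N_α := |β⁻¹(α)| ≥ 1; let P_α ∈ Matrix(I, I, ℂ) be the diagonal 0–1 projection onto the coordinates i with β(i) = α. Let u be the random unitary on ℂ^I that is block diagonal with respect to this partition, whose restriction to each block subspace is Haar-distributed on the unitary group of that block, independently across blocks. Then for every matrix A ∈ Matrix(I×R, I×R, ℂ): E_u[ (u ⊗ I_R)·A·(u ⊗ I_R)† ] = Σ_{α=0}^{B−1} (1/N_α) · ( P_α ⊗ Tr_I[ (P_α ⊗ I_R)·A·(P_α ⊗ I_R) ] ), where Tr_I denotes the partial trace over the I tensor factor (i.e. (Tr_I M)(r, r′) = Σ_{i} M((i,r),(i,r′))). -/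

import Mathlib

set_option synthInstance.maxHeartbeats 1000000
set_option maxHeartbeats 1000000
set_option linter.unusedSectionVars false

open scoped ComplexConjugate


open Finset Matrix MeasureTheory
open scoped Kronecker

/-- Matrices inherit the product measurable structure. -/
noncomputable instance matrixMeasurableSpace {m n α : Type*} [MeasurableSpace α] :
    MeasurableSpace (Matrix m n α) :=
  inferInstanceAs (MeasurableSpace (m → n → α))

/-- Partial trace over the first tensor factor:
`(Tr_A M)(b, b') = Σ_a M((a,b), (a,b'))`. -/
noncomputable def ptraceFst {A B : Type*} [Fintype A]
    (M : Matrix (A × B) (A × B) ℂ) : Matrix B B ℂ :=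
  Matrix.of fun b b' => ∑ a, M (a, b) (a, b')

/-- The block-diagonal unitary matrix on `ℂ^I` assembled from unitaries on the block
subspaces `β⁻¹(α)` of a block labeling `β : I → Fin B`. -/
noncomputable def blockAssemble {I : Type*} [Fintype I] [DecidableEq I] {B : ℕ}
    (β : I → Fin B)
    (v : ∀ α : Fin B, Matrix.unitaryGroup {i : I // β i = α} ℂ) :
    Matrix I I ℂ :=
  Matrix.of fun i j =>
    if h : β j = β i then
      ((v (β i) : Matrix {k : I // β k = β i} {k : I // β k = β i} ℂ)
        ⟨i, rfl⟩ ⟨j, h⟩)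
    else 0

section Aux
open Matrix MeasureTheory
variable {K : Type*} [Fintype K] [DecidableEq K]

lemma meas_entry (i j : K) : Measurable (fun u : Matrix.unitaryGroup K ℂ => (u : Matrix K K ℂ) i j) :=
  ((measurable_subtype_coe (p := fun x : Matrix K K ℂ => x ∈ Matrix.unitaryGroup K ℂ)).eval).eval

lemma integrable_of_bdd {X : Type*} [MeasurableSpace X] {μ : Measure X} [IsFiniteMeasure μ]
    {f : X → ℂ} (hf : Measurable f) {C : ℝ} (hC : ∀ x, ‖f x‖ ≤ C) : Integrable f μ := by
  refine ⟨hf.aestronglyMeasurable, ?_⟩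
  exact HasFiniteIntegral.of_bounded (C := C) (Filter.Eventually.of_forall hC)

instance : MeasurableMul (Matrix.unitaryGroup K ℂ) := by
  constructor
  · intro c
    refine Measurable.subtype_mk ?_
    refine measurable_pi_lambda _ fun i => measurable_pi_lambda _ fun j => ?_
    have : (fun u : Matrix.unitaryGroup K ℂ => ((c : Matrix K K ℂ) * (u : Matrix K K ℂ)) i j)
        = fun u : Matrix.unitaryGroup K ℂ => ∑ k, (c : Matrix K K ℂ) i k * (↑u : Matrix K K ℂ) k j := by
      funext u; simp [Matrix.mul_apply]
    rw [this]
    exact Finset.measurable_sum _ fun k _ => (meas_entry k j).const_mul _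
  · intro c
    refine Measurable.subtype_mk ?_
    refine measurable_pi_lambda _ fun i => measurable_pi_lambda _ fun j => ?_
    have : (fun u : Matrix.unitaryGroup K ℂ => ((u : Matrix K K ℂ) * (c : Matrix K K ℂ)) i j)
        = fun u : Matrix.unitaryGroup K ℂ => ∑ k, (↑u : Matrix K K ℂ) i k * (c : Matrix K K ℂ) k j := by
      funext u; simp [Matrix.mul_apply]
    rw [this]
    exact Finset.measurable_sum _ fun k _ => (meas_entry i k).mul_const _

lemma meas_conj {X : Type*} [MeasurableSpace X] {f : X → ℂ} (hf : Measurable f) :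
    Measurable fun x => conj (f x) :=
  Complex.continuous_conj.measurable.comp hf

lemma integrable_entry_mul_conj (μ : Measure (Matrix.unitaryGroup K ℂ)) [IsFiniteMeasure μ]
    (i j k l : K) :
    Integrable (fun u : Matrix.unitaryGroup K ℂ =>
      (u : Matrix K K ℂ) i j * conj ((u : Matrix K K ℂ) k l)) μ := by
  refine integrable_of_bdd ((meas_entry i j).mul (meas_conj (meas_entry k l))) (C := 1) ?_
  intro u
  rw [norm_mul, RCLike.norm_conj]
  calc ‖(u : Matrix K K ℂ) i j‖ * ‖(u : Matrix K K ℂ) k l‖ ≤ 1 * 1 := by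
        gcongr <;> exact entry_norm_bound_of_unitary u.2 _ _
    _ = 1 := one_mul 1

/-- diagonal sign unitary -/
noncomputable def sgnU (i : K) : Matrix.unitaryGroup K ℂ :=
  ⟨Matrix.diagonal (fun k => if k = i then (-1 : ℂ) else 1), by
    rw [Matrix.mem_unitaryGroup_iff]
    have hd : (star fun k => if k = i then (-1:ℂ) else 1) = (fun k => if k = i then (-1:ℂ) else 1) := by
      funext k; by_cases h : k = i <;> simp [h]
    have : star (Matrix.diagonal (fun k => if k = i then (-1:ℂ) else 1))
        = Matrix.diagonal (fun k => if k = i then (-1:ℂ) else 1) := by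
      rw [Matrix.star_eq_conjTranspose, Matrix.diagonal_conjTranspose, hd]
    rw [this, Matrix.diagonal_mul_diagonal]
    ext a b
    by_cases h : a = i <;> simp [Matrix.diagonal_apply, h, Matrix.one_apply]⟩

lemma sgnU_mul_apply (i : K) (u : Matrix.unitaryGroup K ℂ) (a b : K) :
    ((sgnU i * u : Matrix.unitaryGroup K ℂ) : Matrix K K ℂ) a b
      = (if a = i then (-1:ℂ) else 1) * (u : Matrix K K ℂ) a b := by
  show ((sgnU i : Matrix K K ℂ) * (u : Matrix K K ℂ)) a b = _
  rw [sgnU]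
  simp [Matrix.diagonal_mul]

/-- permutation unitary: (permU σ * u) a b = u (σ a) b -/
noncomputable def permU (σ : Equiv.Perm K) : Matrix.unitaryGroup K ℂ :=
  ⟨Matrix.of (fun a b => if b = σ a then (1:ℂ) else 0), by
    rw [Matrix.mem_unitaryGroup_iff]
    ext a b
    simp only [Matrix.mul_apply, Matrix.star_apply, Matrix.of_apply, apply_ite (star : ℂ → ℂ), star_one, star_zero,
      Matrix.one_apply]
    rw [Finset.sum_eq_single (σ a)]
    · simp [σ.injective.eq_iff, eq_comm]
    · intro c _ hc
      simp [hc]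
    · simp⟩

lemma permU_mul_apply (σ : Equiv.Perm K) (u : Matrix.unitaryGroup K ℂ) (a b : K) :
    ((permU σ * u : Matrix.unitaryGroup K ℂ) : Matrix K K ℂ) a b
      = (u : Matrix K K ℂ) (σ a) b := by
  show ((permU σ : Matrix K K ℂ) * (u : Matrix K K ℂ)) a b = _
  rw [permU]
  simp only [Matrix.mul_apply, Matrix.of_apply, ite_mul, one_mul, zero_mul]
  rw [Finset.sum_eq_single (σ a)]
  · simp
  · intro c _ hc; simp [hc]
  · simp

variable [Nonempty K] (μ : Measure (Matrix.unitaryGroup K ℂ)) [IsProbabilityMeasure μ]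
  [μ.IsHaarMeasure]

lemma haar_first_moment (i j : K) : ∫ u, (u : Matrix K K ℂ) i j ∂μ = 0 := by
  have h := integral_mul_left_eq_self (μ := μ) (fun u : Matrix.unitaryGroup K ℂ =>
    (u : Matrix K K ℂ) i j) (sgnU i)
  simp only [sgnU_mul_apply, if_pos, neg_one_mul, reduceIte] at h
  rw [integral_neg] at h
  linear_combination (-(1:ℂ)/2) * h

lemma haar_second_moment (i j k l : K) :
    ∫ u, (u : Matrix K K ℂ) i j * conj ((u : Matrix K K ℂ) k l) ∂μ
      = if i = k ∧ j = l then ((Fintype.card K : ℂ))⁻¹ else 0 := by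
  by_cases hik : i = k
  · subst hik
    -- independence of row index
    have hrow : ∀ i' : K, (∫ u, (u : Matrix K K ℂ) i' j * conj ((u : Matrix K K ℂ) i' l) ∂μ)
        = ∫ u, (u : Matrix K K ℂ) i j * conj ((u : Matrix K K ℂ) i l) ∂μ := by
      intro i'
      have h := integral_mul_left_eq_self (μ := μ) (fun u : Matrix.unitaryGroup K ℂ =>
        (u : Matrix K K ℂ) i' j * conj ((u : Matrix K K ℂ) i' l)) (permU (Equiv.swap i' i))
      simp only [permU_mul_apply, Equiv.swap_apply_left] at h
      exact h.symm
    have hsum : ∑ i' : K, (∫ u, (u : Matrix K K ℂ) i' j * conj ((u : Matrix K K ℂ) i' l) ∂μ)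
        = if j = l then 1 else 0 := by
      rw [← integral_finset_sum _ (fun i' _ => integrable_entry_mul_conj μ i' j i' l)]
      have : ∀ u : Matrix.unitaryGroup K ℂ,
          ∑ i' : K, (u : Matrix K K ℂ) i' j * conj ((u : Matrix K K ℂ) i' l)
            = if j = l then 1 else 0 := by
        intro u
        have hu : (star (u : Matrix K K ℂ)) * (u : Matrix K K ℂ) = 1 := u.2.1
        have := congrFun (congrFun hu l) j
        simp only [Matrix.mul_apply, Matrix.star_apply, Matrix.one_apply] at this
        calc ∑ i' : K, (u : Matrix K K ℂ) i' j * conj ((u : Matrix K K ℂ) i' l)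
            = ∑ x : K, star ((u : Matrix K K ℂ) x l) * (u : Matrix K K ℂ) x j :=
              Finset.sum_congr rfl (fun x _ => by rw [RCLike.star_def]; ring)
          _ = if l = j then 1 else 0 := this
          _ = if j = l then 1 else 0 := by simp [eq_comm]
      rw [integral_congr_ae (Filter.Eventually.of_forall this)]
      simp [integral_const]
    rw [Finset.sum_congr rfl (fun i' _ => hrow i')] at hsum
    simp only [Finset.sum_const, Finset.card_univ, nsmul_eq_mul] at hsum
    have hc : (Fintype.card K : ℂ) ≠ 0 := Nat.cast_ne_zero.2 Fintype.card_ne_zero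
    by_cases hjl : j = l
    · simp only [hjl, if_pos, and_true, true_and, reduceIte] at hsum ⊢
      field_simp
      linear_combination hsum
    · simp only [hjl, if_neg, and_false, reduceIte] at hsum ⊢
      exact (mul_eq_zero.mp hsum).resolve_left hc
  · have h := integral_mul_left_eq_self (μ := μ) (fun u : Matrix.unitaryGroup K ℂ =>
      (u : Matrix K K ℂ) i j * conj ((u : Matrix K K ℂ) k l)) (sgnU i)
    simp only [sgnU_mul_apply, reduceIte, if_neg (Ne.symm hik), neg_one_mul, one_mul, map_neg,
      neg_mul, mul_neg] at h
    rw [integral_neg] at h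
    rw [if_neg (by tauto)]
    linear_combination (-(1:ℂ)/2) * h

section KeyInt
variable {I : Type*} [Fintype I] [DecidableEq I] {B : ℕ} (β : I → Fin B)

lemma key_integral
    (ν : ∀ α : Fin B, Measure (Matrix.unitaryGroup {i : I // β i = α} ℂ))
    (hprob : ∀ α, IsProbabilityMeasure (ν α)) (hhaar : ∀ α, (ν α).IsHaarMeasure)
    (i j i' j' : I) :
    ∫ v, blockAssemble β v i j * conj (blockAssemble β v i' j') ∂(Measure.pi ν)
      = if i = i' ∧ j = j' ∧ β j = β i then ((Fintype.card {k : I // β k = β i} : ℂ))⁻¹ else 0 := by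
  haveI := hprob
  haveI := hhaar
  by_cases hj : β j = β i
  swap
  · have h0 : ∀ v, blockAssemble β v i j * conj (blockAssemble β v i' j') = 0 := by
      intro v; simp [blockAssemble, hj]
    rw [integral_congr_ae (Filter.Eventually.of_forall h0), integral_zero, if_neg (by tauto)]
  by_cases hj' : β j' = β i'
  swap
  · have h0 : ∀ v, blockAssemble β v i j * conj (blockAssemble β v i' j') = 0 := by
      intro v; simp [blockAssemble, hj']
    rw [integral_congr_ae (Filter.Eventually.of_forall h0), integral_zero, if_neg ?_]
    rintro ⟨rfl, rfl, h⟩; exact hj' h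
  set g : ∀ γ : Fin B, Matrix.unitaryGroup {k : I // β k = γ} ℂ → ℂ := fun γ w =>
    (if h : β i = γ then
        (w : Matrix {k : I // β k = γ} {k : I // β k = γ} ℂ) ⟨i, h⟩ ⟨j, hj.trans h⟩ else 1) *
    (if h : β i' = γ then
        conj ((w : Matrix {k : I // β k = γ} {k : I // β k = γ} ℂ) ⟨i', h⟩ ⟨j', hj'.trans h⟩)
      else 1) with hg
  have hfact : ∀ v, blockAssemble β v i j * conj (blockAssemble β v i' j') = ∏ γ, g γ (v γ) := by
    intro v
    rw [hg]
    rw [Finset.prod_mul_distrib, Finset.prod_dite_eq, Finset.prod_dite_eq]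
    simp [blockAssemble, hj, hj']
  have hint : ∫ v, blockAssemble β v i j * conj (blockAssemble β v i' j') ∂(Measure.pi ν)
      = ∏ γ, ∫ w, g γ w ∂(ν γ) := by
    letI : ∀ α : Fin B, MeasureSpace (Matrix.unitaryGroup {k : I // β k = α} ℂ) :=
      fun α => ⟨ν α⟩
    haveI hsf : ∀ α : Fin B,
        SigmaFinite (volume : Measure (Matrix.unitaryGroup {k : I // β k = α} ℂ)) :=
      fun α => inferInstanceAs (SigmaFinite (ν α))
    haveI : ∀ α, SigmaFinite (ν α) := fun α => inferInstance
    have h := MeasureTheory.integral_fintype_prod_eq_prod (𝕜 := ℂ) (ι := Fin B) g (μ := ν)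
    rw [integral_congr_ae (Filter.Eventually.of_forall hfact)]
    exact h
  rw [hint]
  by_cases hii : β i = β i'
  · haveI : Nonempty {k : I // β k = β i} := ⟨⟨i, rfl⟩⟩
    have hgval : ∀ w, g (β i) w =
        (w : Matrix {k : I // β k = β i} {k : I // β k = β i} ℂ) ⟨i, rfl⟩ ⟨j, hj⟩ *
        conj ((w : Matrix {k : I // β k = β i} {k : I // β k = β i} ℂ)
          ⟨i', hii.symm⟩ ⟨j', hj'.trans hii.symm⟩) := by
      intro w
      rw [hg]
      dsimp only
      rw [dif_pos rfl, dif_pos hii.symm]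
    have hprod : ∏ γ, ∫ w, g γ w ∂(ν γ) = ∫ w, g (β i) w ∂(ν (β i)) := by
      apply Finset.prod_eq_single_of_mem (β i) (Finset.mem_univ _)
      intro γ _ hγ
      have h1 : ¬ (β i = γ) := fun h => hγ h.symm
      have h2 : ¬ (β i' = γ) := fun h => hγ (h.symm.trans hii.symm)
      have : ∀ w, g γ w = 1 := by
        intro w; rw [hg]; dsimp only; rw [dif_neg h1, dif_neg h2, one_mul]
      rw [integral_congr_ae (Filter.Eventually.of_forall this)]
      simp
    rw [hprod, integral_congr_ae (Filter.Eventually.of_forall hgval),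
      haar_second_moment (ν (β i)) _ _ _ _]
    simp only [Subtype.mk.injEq, hj, and_true]
  · have hzero : ∫ w, g (β i) w ∂(ν (β i)) = 0 := by
      haveI : Nonempty {k : I // β k = β i} := ⟨⟨i, rfl⟩⟩
      have hgval : ∀ w, g (β i) w =
          (w : Matrix {k : I // β k = β i} {k : I // β k = β i} ℂ) ⟨i, rfl⟩ ⟨j, hj⟩ := by
        intro w
        rw [hg]
        dsimp only
        rw [dif_pos rfl, dif_neg (fun h => hii h.symm), mul_one]
      rw [integral_congr_ae (Filter.Eventually.of_forall hgval)]
      exact haar_first_moment (ν (β i)) _ _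
    rw [Finset.prod_eq_zero (Finset.mem_univ (β i)) hzero, if_neg ?_]
    rintro ⟨rfl, -, -⟩; exact hii rfl

end KeyInt

section BlockInt
variable {I : Type*} [Fintype I] [DecidableEq I] {B : ℕ} (β : I → Fin B)

lemma meas_blockentry (i j : I) :
    Measurable (fun v : ∀ α : Fin B, Matrix.unitaryGroup {k : I // β k = α} ℂ =>
      blockAssemble β v i j) := by
  unfold blockAssemble
  by_cases h : β j = β i
  · simp only [Matrix.of_apply, dif_pos h]
    exact (meas_entry (⟨i, rfl⟩ : {k : I // β k = β i}) ⟨j, h⟩).comp (measurable_pi_apply (β i))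
  · simp only [Matrix.of_apply, dif_neg h]
    exact measurable_const

lemma norm_blockentry_le (v : ∀ α : Fin B, Matrix.unitaryGroup {k : I // β k = α} ℂ) (i j : I) :
    ‖blockAssemble β v i j‖ ≤ 1 := by
  unfold blockAssemble
  by_cases h : β j = β i
  · simp only [Matrix.of_apply, dif_pos h]
    exact entry_norm_bound_of_unitary (v (β i)).2 _ _
  · simp only [Matrix.of_apply, dif_neg h]
    simp

lemma integrable_block
    (ν : ∀ α : Fin B, Measure (Matrix.unitaryGroup {i : I // β i = α} ℂ))
    [∀ α, IsProbabilityMeasure (ν α)] (i j i' j' : I) :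
    Integrable (fun v => blockAssemble β v i j * conj (blockAssemble β v i' j'))
      (Measure.pi ν) := by
  refine integrable_of_bdd ((meas_blockentry β i j).mul
    (meas_conj (meas_blockentry β i' j'))) (C := 1) ?_
  intro v
  rw [norm_mul, RCLike.norm_conj]
  calc ‖blockAssemble β v i j‖ * ‖blockAssemble β v i' j'‖ ≤ 1 * 1 := by
        gcongr <;> exact norm_blockentry_le β v _ _
    _ = 1 := one_mul 1

end BlockInt

end Aux

/-- **First-moment formula for block-diagonal Haar-random unitaries.**
Let `u = blockAssemble β v` be the random unitary on `ℂ^I`, block diagonal with respect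
to the blocks `β⁻¹(α)` and Haar-distributed independently on each block (i.e. `v` is
distributed according to the product `Measure.pi ν` of Haar probability measures).
Then for every matrix `A` on `ℂ^I ⊗ ℂ^R`, entrywise,
`E_v[(u ⊗ 1)·A·(u ⊗ 1)†] = Σ_α (1/N_α)·(P_α ⊗ Tr_I[(P_α ⊗ 1)·A·(P_α ⊗ 1)])`,
where `P_α` is the diagonal projection onto block `α` and `N_α` its size. -/


theorem block_haar_unitary_average
    {I R : Type*} [Fintype I] [Fintype R] [DecidableEq I] [DecidableEq R]
    [Nonempty I] [Nonempty R]
    {B : ℕ} (hB : 1 ≤ B) (β : I → Fin B) (hβ : Function.Surjective β)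
    (ν : ∀ α : Fin B, Measure (Matrix.unitaryGroup {i : I // β i = α} ℂ))
    (hprob : ∀ α, IsProbabilityMeasure (ν α))
    (hhaar : ∀ α, (ν α).IsHaarMeasure)
    (P : Fin B → Matrix I I ℂ)
    (hP : ∀ α, P α = Matrix.diagonal fun i => if β i = α then 1 else 0)
    (A : Matrix (I × R) (I × R) ℂ) :
    ∀ pq qr : I × R,
      (∫ v, ((blockAssemble β v ⊗ₖ (1 : Matrix R R ℂ)) * A *
            (blockAssemble β v ⊗ₖ (1 : Matrix R R ℂ))ᴴ) pq qr
          ∂(Measure.pi ν)) =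
      (∑ α : Fin B,
        ((Fintype.card {i : I // β i = α} : ℂ))⁻¹ •
          ((P α) ⊗ₖ ptraceFst
            ((P α ⊗ₖ (1 : Matrix R R ℂ)) * A * (P α ⊗ₖ (1 : Matrix R R ℂ)))))
        pq qr := by
  haveI := hprob
  intro pq qr
  obtain ⟨i, r⟩ := pq
  obtain ⟨i', r'⟩ := qr
  -- Step 1: pointwise expansion of the integrand
  have hexp : ∀ v : ∀ α : Fin B, Matrix.unitaryGroup {k : I // β k = α} ℂ,
      ((blockAssemble β v ⊗ₖ (1 : Matrix R R ℂ)) * A *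
        (blockAssemble β v ⊗ₖ (1 : Matrix R R ℂ))ᴴ) (i,r) (i',r')
      = ∑ x : I × R, ∑ y : I × R,
          (blockAssemble β v i x.1 * conj (blockAssemble β v i' y.1)) *
          ((1 : Matrix R R ℂ) r x.2 * A x y * (1 : Matrix R R ℂ) r' y.2) := by
    intro v
    simp only [Matrix.mul_apply, Matrix.conjTranspose_apply, Matrix.kroneckerMap_apply,
      Finset.sum_mul]
    rw [Finset.sum_comm]
    refine Finset.sum_congr rfl fun x _ => Finset.sum_congr rfl fun y _ => ?_
    rw [star_mul']
    have h1 : star ((1 : Matrix R R ℂ) r' y.2) = (1 : Matrix R R ℂ) r' y.2 := by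
      by_cases h : r' = y.2 <;> simp [Matrix.one_apply, h]
    rw [h1, RCLike.star_def]; ring
  rw [integral_congr_ae (Filter.Eventually.of_forall hexp)]
  rw [integral_finset_sum _ (fun x _ => integrable_finset_sum _
    (fun y _ => (integrable_block β ν i x.1 i' y.1).mul_const _))]
  have hstep2 : ∀ x : I × R, (∫ v, ∑ y : I × R,
      (blockAssemble β v i x.1 * conj (blockAssemble β v i' y.1)) *
      ((1 : Matrix R R ℂ) r x.2 * A x y * (1 : Matrix R R ℂ) r' y.2) ∂(Measure.pi ν))
      = ∑ y : I × R,
        (if i = i' ∧ x.1 = y.1 ∧ β x.1 = β i then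
            ((Fintype.card {k : I // β k = β i} : ℂ))⁻¹ else 0) *
        ((1 : Matrix R R ℂ) r x.2 * A x y * (1 : Matrix R R ℂ) r' y.2) := by
    intro x
    rw [integral_finset_sum _ (fun y _ => (integrable_block β ν i x.1 i' y.1).mul_const _)]
    refine Finset.sum_congr rfl fun y _ => ?_
    rw [integral_mul_const, key_integral β ν hprob hhaar i x.1 i' y.1]
  rw [Finset.sum_congr rfl fun x _ => hstep2 x]
  have hR : (∑ α : Fin B,
        ((Fintype.card {i : I // β i = α} : ℂ))⁻¹ •
          ((P α) ⊗ₖ ptraceFst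
            ((P α ⊗ₖ (1 : Matrix R R ℂ)) * A * (P α ⊗ₖ (1 : Matrix R R ℂ)))))
        (i,r) (i',r')
      = if i = i' then ((Fintype.card {k : I // β k = β i} : ℂ))⁻¹ *
          ∑ j : I, (if β j = β i then A (j,r) (j,r') else 0) else 0 := by
    simp only [Matrix.sum_apply, Matrix.smul_apply, Matrix.kroneckerMap_apply, hP,
      Matrix.diagonal_apply, ptraceFst, Matrix.of_apply, smul_eq_mul, Matrix.mul_apply,
      Matrix.one_apply, Fintype.sum_prod_type]
    by_cases hii : i = i'
    · subst hii
      simp only [if_pos rfl, reduceIte, mul_ite, ite_mul, mul_one, one_mul, mul_zero, zero_mul,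
        Finset.sum_ite_eq, Finset.sum_ite_eq', Finset.mem_univ, if_true]
      refine congrArg _ (Finset.sum_congr rfl fun x _ => ?_)
      by_cases h : β x = β i <;> simp [h]
    · simp [hii]
  rw [hR]
  by_cases hii : i = i'
  · subst hii
    simp only [if_pos rfl, true_and, reduceIte]
    simp only [Matrix.one_apply, mul_ite, ite_mul, mul_one, one_mul, mul_zero, zero_mul,
      Fintype.sum_prod_type, Finset.sum_ite_eq, Finset.sum_ite_eq', Finset.mem_univ, if_true]
    rw [Finset.mul_sum]
    refine Finset.sum_congr rfl fun x _ => ?_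
    rw [Finset.sum_comm]
    simp only [Finset.sum_ite_eq, Finset.mem_univ, if_true]
    by_cases hbx : β x = β i
    · simp only [hbx, and_true, Finset.sum_ite_eq, Finset.mem_univ, if_true, if_pos]
    · simp [hbx]
  · simp [hii]
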